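/- Let $K$ be a compact subset of a topological group $G$ and let $H$ be a discrete subgroup of $G$ that is closed in $G$. Then for every $n \in \mathbb{N}$ the set $\{x \in G : |K \cap Hx| \geq n\}$ is closed in $G$. -/

import Mathlib

open Set Filter Pointwise Topology

theorem stmt_3 {G : Type*} [Group G] [TopologicalSpace G] [IsTopologicalGroup G]
    (K : Set G) (hK : IsCompact K) (H : Subgroup G) (hH : DiscreteTopology H)
    (hHc : IsClosed (H : Set G)) (n : ℕ) :
    IsClosed {x : G | n ≤ Nat.card (K ∩ ((fun h => h * x) '' (H : Set G)) : Set G)} := by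
  rw [← isOpen_compl_iff, isOpen_iff_mem_nhds]
  intro x hx
  rw [Set.mem_compl_iff, Set.mem_setOf_eq, not_le] at hx
  set Hx : Set G := (fun h => h * x) '' (H : Set G) with hHxdef
  have hdHx : DiscreteTopology ↥Hx := by
    have : DiscreteTopology ↥((Homeomorph.mulRight x) '' (H : Set G)) :=
      (((Homeomorph.mulRight x).image (H : Set G)).symm).isEmbedding.discreteTopology
    exact this
  have hcHx : IsClosed Hx := (Homeomorph.mulRight x).isClosedMap _ hHc
  have hfin : (K ∩ Hx).Finite :=
    (hK.inter_right hcHx).finite (isDiscrete_iff_discreteTopology.mpr (DiscreteTopology.of_subset hdHx Set.inter_subset_right))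
  have _ : Finite ↥(K ∩ Hx) := hfin.to_subtype
  -- F = elements h of H with h * x ∈ K
  set F : Set G := (fun k => k * x⁻¹) '' (K ∩ Hx) with hFdef
  have hFfin : F.Finite := hfin.image _
  -- H \ F is closed
  have hdisj : ∀ g : G, Disjoint (𝓝[≠] g) (Filter.principal (H : Set G)) :=
    isClosed_and_discrete_iff.mp ⟨hHc, isDiscrete_iff_discreteTopology.mpr hH⟩
  have hHFc : IsClosed ((H : Set G) \ F) :=
    (isClosed_and_discrete_iff.mpr fun g =>
      (hdisj g).mono_right (Filter.principal_mono.mpr diff_subset)).1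
  -- the closed "bad" set
  set C : Set G := ((H : Set G) \ F)⁻¹ * K with hCdef
  have hCc : IsClosed C := (hHFc.inv).mul_right_of_isCompact hK
  have hxC : x ∉ C := by
    rintro ⟨a, ha, k, hk, rfl⟩
    rw [Set.mem_inv] at ha
    obtain ⟨haH, haF⟩ := ha
    apply haF
    refine ⟨a⁻¹ * (a * k), ⟨?_, ?_⟩, ?_⟩
    · simpa using hk
    · exact ⟨a⁻¹, by simpa using haH, rfl⟩
    · group
  refine Filter.mem_of_superset (hCc.isOpen_compl.mem_nhds hxC) ?_
  intro u hu
  rw [Set.mem_compl_iff, Set.mem_setOf_eq, not_le]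
  -- injection from K ∩ Hu into K ∩ Hx
  have key : ∀ k ∈ K ∩ ((fun h => h * u) '' (H : Set G)), k * u⁻¹ * x ∈ K ∩ Hx := by
    rintro k ⟨hkK, h, hhH, rfl⟩
    have hnotbad : h ∉ (H : Set G) \ F := by
      intro hbad
      exact hu ⟨h⁻¹, Set.inv_mem_inv.mpr hbad, h * u, hkK, by group⟩
    have hhF : h ∈ F := by
      by_contra hc; exact hnotbad ⟨hhH, hc⟩
    obtain ⟨k', hk', rfl⟩ := hhF
    simpa using hk'
  have hinj : Function.Injective
      (fun k : ↥(K ∩ ((fun h => h * u) '' (H : Set G))) =>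
        (⟨(k : G) * u⁻¹ * x, key k k.2⟩ : ↥(K ∩ Hx))) := by
    rintro ⟨a, ha⟩ ⟨b, hb⟩ hab
    simp only [Subtype.mk.injEq, mul_left_inj] at hab
    exact Subtype.ext hab
  calc Nat.card ↥(K ∩ ((fun h => h * u) '' (H : Set G)))
      ≤ Nat.card ↥(K ∩ Hx) := Nat.card_le_card_of_injective _ hinj
    _ < n := hx
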